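/- For every finite simple graph G = (V,E) and every pair of distinct vertices v, w of G, the graph G*v*w*v is exactly the graph obtained from G by exchanging the labels of v and w: for all vertices x, y, xy is an edge of G*v*w*v if and only if τ(x)τ(y) is an edge of G, where τ is the transposition of V swapping v and w. In particular, G*v*w*v is isomorphic to G, and G*v*w is isomorphic to G*w. -/

import Mathlib

universe u

/-- The Seidel complement of `G` at `v`: adjacency between the open neighborhood of `v`
and the set of vertices different from `v` and not adjacent to `v` is complemented,
all other adjacencies are unchanged. -/
def seidelCompl {V : Type u} (G : SimpleGraph V) (v : V) : SimpleGraph V where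
  Adj x y := x ≠ y ∧
    Xor' (G.Adj x y)
      ((G.Adj v x ∧ ¬ G.Adj v y ∧ y ≠ v) ∨ (G.Adj v y ∧ ¬ G.Adj v x ∧ x ≠ v))
  symm := ⟨by
    rintro x y ⟨hxy, h⟩
    refine ⟨hxy.symm, ?_⟩
    have h1 : G.Adj x y ↔ G.Adj y x := G.adj_comm x y
    unfold Xor' at h ⊢
    first
      | (unfold Xor at h ⊢; tauto)
      | (simp only [xor_def] at h ⊢; tauto)⟩
  loopless := ⟨fun x h => h.1 rfl⟩

lemma seidelCompl_adj {V : Type u} (G : SimpleGraph V) (v x y : V) :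
    (seidelCompl G v).Adj x y ↔ x ≠ y ∧
    Xor' (G.Adj x y)
      ((G.Adj v x ∧ ¬ G.Adj v y ∧ y ≠ v) ∨ (G.Adj v y ∧ ¬ G.Adj v x ∧ x ≠ v)) := Iff.rfl

set_option maxHeartbeats 8000000 in
lemma seidel_key1 {V : Type u} [DecidableEq V] (G : SimpleGraph V) (v w : V) (hvw : v ≠ w)
    (x y : V) : (seidelCompl (seidelCompl (seidelCompl G v) w) v).Adj x y ↔
        G.Adj (Equiv.swap v w x) (Equiv.swap v w y) := by
  have svx := G.adj_comm v x
  have svy := G.adj_comm v y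
  have swx := G.adj_comm w x
  have swy := G.adj_comm w y
  have svw := G.adj_comm v w
  have lv := G.loopless.irrefl v
  have lw := G.loopless.irrefl w
  have lx := G.loopless.irrefl x
  have ly := G.loopless.irrefl y
  by_cases hxy : x = y
  · subst hxy
    simp [seidelCompl_adj]
  by_cases hxv : x = v <;> by_cases hxw : x = w <;> by_cases hyv : y = v <;>
    by_cases hyw : y = w <;>
  by_cases a1 : G.Adj x y <;> by_cases a2 : G.Adj v x <;> by_cases a3 : G.Adj v y <;>
    by_cases a4 : G.Adj w x <;> by_cases a5 : G.Adj w y <;> by_cases a6 : G.Adj v w <;>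
    simp_all [seidelCompl_adj, Xor', eq_comm, Equiv.swap_apply_def]

set_option maxHeartbeats 1000000 in
lemma seidel_invol {V : Type u} (G : SimpleGraph V) (u x y : V) :
    (seidelCompl (seidelCompl G u) u).Adj x y ↔ G.Adj x y := by
  have sux := G.adj_comm u x
  have suy := G.adj_comm u y
  have lu := G.loopless.irrefl u
  have lx := G.loopless.irrefl x
  have ly := G.loopless.irrefl y
  have nxy : G.Adj x y → x ≠ y := G.ne_of_adj
  by_cases hxy : x = y
  · subst hxy; simp [seidelCompl_adj]
  by_cases hxu : x = u <;> by_cases hyu : y = u <;>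
  by_cases a1 : G.Adj x y <;> by_cases a2 : G.Adj u x <;> by_cases a3 : G.Adj u y <;>
    simp_all [seidelCompl_adj, Xor', eq_comm]

lemma seidel_transport {V : Type u} (H G : SimpleGraph V) (e : V ≃ V)
    (h : ∀ a b, H.Adj a b ↔ G.Adj (e a) (e b)) (u x y : V) :
    (seidelCompl H u).Adj x y ↔ (seidelCompl G (e u)).Adj (e x) (e y) := by
  simp only [seidelCompl_adj, h, ne_eq, EmbeddingLike.apply_eq_iff_eq]

/-- For distinct vertices `v, w`, the graph `G*v*w*v` is exactly `G` with the labels of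
`v` and `w` exchanged; in particular `G*v*w*v ≅ G` and `G*v*w ≅ G*w`. -/
theorem seidelCompl_triple_swap {V : Type u} [Fintype V] [DecidableEq V]
    (G : SimpleGraph V) (v w : V) (hvw : v ≠ w) :
    (∀ x y : V, (seidelCompl (seidelCompl (seidelCompl G v) w) v).Adj x y ↔
        G.Adj (Equiv.swap v w x) (Equiv.swap v w y)) ∧
    Nonempty ((seidelCompl (seidelCompl (seidelCompl G v) w) v) ≃g G) ∧
    Nonempty ((seidelCompl (seidelCompl G v) w) ≃g seidelCompl G w) := by
  have key1 := seidel_key1 G v w hvw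
  refine ⟨key1, ⟨⟨Equiv.swap v w, fun {a b} => (key1 a b).symm⟩⟩, ?_⟩
  have key2 : ∀ x y : V, (seidelCompl (seidelCompl G v) w).Adj x y ↔
      (seidelCompl G w).Adj (Equiv.swap v w x) (Equiv.swap v w y) := by
    intro x y
    have h1 := seidel_invol (seidelCompl (seidelCompl G v) w) v x y
    rw [← h1]
    have h2 := seidel_transport (seidelCompl (seidelCompl (seidelCompl G v) w) v) G
      (Equiv.swap v w) key1 v x y
    rw [h2, Equiv.swap_apply_left]
  exact ⟨⟨Equiv.swap v w, fun {a b} => (key2 a b).symm⟩⟩
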